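/- Let A be the (k+1) \times n matrix whose columns are grouped into k blocks, where the column (i,j) (block i, position j, 1 \leq j \leq m_i) is e_i + (j-1) e_{k+1} \in \mathbb{N}^{k+1}. Suppose u, v \in \mathbb{N}^n satisfy A u = A v, x^u \succ x^v or u = v in the lexicographic order with variables ordered x_{1,1} \succ \cdots \succ x_{1,m_1} \succ x_{2,1} \succ \cdots \succ x_{k,m_k}, and u is supported on a set of the form \{(1,m_1),\dots,(i-1,m_{i-1}), (i,\ell), (i,\ell+1), (i+1,1),\dots,(k,1)\}. Then u = v. -/
import Mathlib


open Finset

private lemma sum_Icc_split (f : ℕ → ℕ) {c d n : ℕ} (hcd : c ≤ d) (hdn : d ≤ n) :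
    ∑ r ∈ Finset.Icc (c+1) n, f r
      = (∑ r ∈ Finset.Icc (c+1) d, f r) + ∑ r ∈ Finset.Icc (d+1) n, f r := by
  simp only [Finset.Icc_add_one_left_eq_Ioc]
  exact (Finset.sum_Ioc_consecutive f hcd hdn).symm

private lemma sum_Icc_split1 (f : ℕ → ℕ) {d n : ℕ} (hdn : d ≤ n) :
    ∑ r ∈ Finset.Icc 1 n, f r
      = (∑ r ∈ Finset.Icc 1 d, f r) + ∑ r ∈ Finset.Icc (d+1) n, f r :=
  sum_Icc_split f (Nat.zero_le d) hdn


private lemma final_contra (l X Y X' Y' S S' T : ℕ)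
    (eq1 : X + Y = X' + Y' + S)
    (eq2 : l * X + (l+1) * Y = l * X' + (l+1) * Y' + S' + T)
    (h3 : (l+2) * S ≤ S')
    (hxx : X' < X ∨ (X = X' ∧ Y' < Y)) : False := by
  have hmul : (l+1) * (X + Y) = (l+1) * (X' + Y' + S) := by rw [eq1]
  rcases hxx with h | ⟨h1, h2⟩
  · linarith
  · linarith

set_option maxHeartbeats 1000000 in
/-- Proposition 3.4 of the paper. Let `A` be the matrix defining the rational normal
`k`-scroll `S(m₁-1,…,m_k-1)` as a toric variety, with variables `x_{i,j}` for
`1 ≤ i ≤ k`, `1 ≤ j ≤ mᵢ` ordered lexicographically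
`x_{1,1} ≻ ⋯ ≻ x_{1,m₁} ≻ x_{2,1} ≻ ⋯ ≻ x_{k,m_k}`. If `u, v` are exponent vectors
with `A u = A v` (same block sums, same weighted last coordinate), `x^u ⪰ x^v` in the
lexicographic order, and `u` is supported on a set of the form
`{(1,m₁),…,(i-1,m_{i-1}), (i,ℓ), (i,ℓ+1), (i+1,1),…,(k,1)}`, then `u = v`. -/
theorem stmt_8 (k : ℕ) (m : ℕ → ℕ) (hk : 1 ≤ k)
    (hm : ∀ i, 1 ≤ i → i ≤ k → 1 ≤ m i)
    (u v : ℕ × ℕ → ℕ)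
    (hu : ∀ i j : ℕ, u (i, j) ≠ 0 → 1 ≤ i ∧ i ≤ k ∧ 1 ≤ j ∧ j ≤ m i)
    (hv : ∀ i j : ℕ, v (i, j) ≠ 0 → 1 ≤ i ∧ i ≤ k ∧ 1 ≤ j ∧ j ≤ m i)
    -- `A u = A v`: the first `k` rows (block sums) agree
    (hA1 : ∀ i, 1 ≤ i → i ≤ k →
      ∑ j ∈ Finset.Icc 1 (m i), u (i, j) = ∑ j ∈ Finset.Icc 1 (m i), v (i, j))
    -- `A u = A v`: the last row (weight `j - 1` on `x_{i,j}`) agrees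
    (hA2 : ∑ i ∈ Finset.Icc 1 k, ∑ j ∈ Finset.Icc 1 (m i), (j - 1) * u (i, j) =
      ∑ i ∈ Finset.Icc 1 k, ∑ j ∈ Finset.Icc 1 (m i), (j - 1) * v (i, j))
    -- `x^u ≻ x^v` or `u = v` in the lexicographic order on exponent vectors
    (hlex : u = v ∨ ∃ p : ℕ × ℕ, v p < u p ∧
      ∀ q : ℕ × ℕ, (q.1 < p.1 ∨ (q.1 = p.1 ∧ q.2 < p.2)) → u q = v q)
    -- the support condition on `u`
    (hshape : ∃ i ℓ : ℕ, 1 ≤ i ∧ i ≤ k ∧ 1 ≤ ℓ ∧ ℓ + 1 ≤ m i ∧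
      ∀ r s : ℕ, u (r, s) ≠ 0 →
        (r < i ∧ s = m r) ∨ (r = i ∧ (s = ℓ ∨ s = ℓ + 1)) ∨ (i < r ∧ s = 1)) :
    u = v := by
  rcases hlex with h | ⟨⟨a, b⟩, hab, hmin⟩
  · exact h
  exfalso
  obtain ⟨i, ℓ, hi1, hik, hℓ1, hℓm, hsupp⟩ := hshape
  obtain ⟨i', rfl⟩ : ∃ t, i = t + 1 := ⟨i - 1, by omega⟩
  obtain ⟨ℓ', rfl⟩ : ∃ t, ℓ = t + 1 := ⟨ℓ - 1, by omega⟩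
  have hab0 : u (a, b) ≠ 0 := by omega
  obtain ⟨ha1, hak, hb1, hbm⟩ := hu a b hab0
  rcases hsupp a b hab0 with ⟨hai, hbma⟩ | ⟨hai, hbl⟩ | ⟨hia, hbone⟩
  · -- Case 1 : a < i, b = m a
    subst hbma
    have hmem : m a ∈ Finset.Icc 1 (m a) := Finset.mem_Icc.mpr ⟨hb1, le_refl _⟩
    have e1 := hA1 a ha1 hak
    rw [← Finset.sum_erase_add _ (fun j => u (a, j)) hmem,
        ← Finset.sum_erase_add _ (fun j => v (a, j)) hmem] at e1
    have key : ∀ j ∈ (Finset.Icc 1 (m a)).erase (m a), u (a, j) = v (a, j) := by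
      intro j hj
      simp only [Finset.mem_erase, Finset.mem_Icc] at hj
      exact hmin (a, j) (Or.inr ⟨rfl, by omega⟩)
    rw [Finset.sum_congr rfl key] at e1
    omega
  · -- Case 2 : a = i
    subst hai
    have hbge : ℓ' + 1 ≤ b := by omega
    -- split a sum over a block at ℓ'-positions
    have blocksplit : ∀ g : ℕ → ℕ, ∑ j ∈ Finset.Icc 1 (m (i'+1)), g j =
        (∑ j ∈ Finset.Icc 1 ℓ', g j) + (g (ℓ'+1) + g (ℓ'+2))
          + ∑ j ∈ Finset.Icc (ℓ'+3) (m (i'+1)), g j := by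
      intro g
      rw [sum_Icc_split1 g (show ℓ' ≤ m (i'+1) by omega),
          sum_Icc_split g (show ℓ' ≤ ℓ' + 2 by omega) (show ℓ' + 2 ≤ m (i'+1) by omega),
          Finset.sum_Icc_succ_top (by omega) g, Finset.Icc_self, Finset.sum_singleton]
      ring
    have low : ∀ j ∈ Finset.Icc 1 ℓ', u (i'+1, j) = v (i'+1, j) := by
      intro j hj
      simp only [Finset.mem_Icc] at hj
      exact hmin (i'+1, j) (Or.inr ⟨rfl, by omega⟩)
    have high0 : ∀ j ∈ Finset.Icc (ℓ'+3) (m (i'+1)), u (i'+1, j) = 0 := by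
      intro j hj
      simp only [Finset.mem_Icc] at hj
      by_contra h
      rcases hsupp (i'+1) j h with h1 | h2 | h3 <;> omega
    -- block sum equation
    have e1 := hA1 (i'+1) hi1 hik
    rw [blocksplit (fun j => u (i'+1, j)), blocksplit (fun j => v (i'+1, j)),
        Finset.sum_congr rfl low, Finset.sum_eq_zero high0] at e1
    -- weighted equation
    have e2 := hA2
    rw [sum_Icc_split1 (fun r => ∑ j ∈ Finset.Icc 1 (m r), (j - 1) * u (r, j))
          (show i' ≤ k by omega),
        sum_Icc_split1 (fun r => ∑ j ∈ Finset.Icc 1 (m r), (j - 1) * v (r, j))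
          (show i' ≤ k by omega),
        sum_Icc_split (fun r => ∑ j ∈ Finset.Icc 1 (m r), (j - 1) * u (r, j))
          (show i' ≤ i' + 1 by omega) hik,
        sum_Icc_split (fun r => ∑ j ∈ Finset.Icc 1 (m r), (j - 1) * v (r, j))
          (show i' ≤ i' + 1 by omega) hik] at e2
    simp only [Finset.Icc_self, Finset.sum_singleton] at e2
    have eqlow : ∀ r ∈ Finset.Icc 1 i',
        (∑ j ∈ Finset.Icc 1 (m r), (j - 1) * u (r, j))
          = ∑ j ∈ Finset.Icc 1 (m r), (j - 1) * v (r, j) := by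
      intro r hr
      simp only [Finset.mem_Icc] at hr
      refine Finset.sum_congr rfl fun j hj => ?_
      rw [hmin (r, j) (Or.inl (by omega))]
    have eqhigh : ∑ r ∈ Finset.Icc (i'+1+1) k,
        ∑ j ∈ Finset.Icc 1 (m r), (j - 1) * u (r, j) = 0 := by
      refine Finset.sum_eq_zero fun r hr => Finset.sum_eq_zero fun j hj => ?_
      simp only [Finset.mem_Icc] at hr hj
      by_cases h : u (r, j) = 0
      · rw [h, mul_zero]
      · rcases hsupp r j h with h1 | h2 | h3
        · omega
        · omega
        · rw [h3.2]; simp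
    rw [Finset.sum_congr rfl eqlow, eqhigh,
        blocksplit (fun j => (j - 1) * u (i'+1, j)),
        blocksplit (fun j => (j - 1) * v (i'+1, j))] at e2
    have wlow : ∀ j ∈ Finset.Icc 1 ℓ',
        (j - 1) * u (i'+1, j) = (j - 1) * v (i'+1, j) := by
      intro j hj; rw [low j hj]
    have whigh : ∀ j ∈ Finset.Icc (ℓ'+3) (m (i'+1)),
        (j - 1) * u (i'+1, j) = 0 := by
      intro j hj; rw [high0 j hj, mul_zero]
    rw [Finset.sum_congr rfl wlow, Finset.sum_eq_zero whigh] at e2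
    have hs1 : ℓ' + 1 - 1 = ℓ' := by omega
    have hs2 : ℓ' + 2 - 1 = ℓ' + 1 := by omega
    rw [hs1, hs2] at e2
    -- the weighted tail of v dominates (ℓ'+2) times the plain tail
    have h3 : (ℓ' + 2) * (∑ j ∈ Finset.Icc (ℓ'+3) (m (i'+1)), v (i'+1, j))
        ≤ ∑ j ∈ Finset.Icc (ℓ'+3) (m (i'+1)), (j - 1) * v (i'+1, j) := by
      rw [Finset.mul_sum]
      refine Finset.sum_le_sum fun j hj => ?_
      simp only [Finset.mem_Icc] at hj
      exact Nat.mul_le_mul_right _ (by omega)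
    -- extract scalar equations
    have eq1 : u (i'+1, ℓ'+1) + u (i'+1, ℓ'+2)
        = v (i'+1, ℓ'+1) + v (i'+1, ℓ'+2)
          + ∑ j ∈ Finset.Icc (ℓ'+3) (m (i'+1)), v (i'+1, j) := by linarith [e1]
    have eq2 : ℓ' * u (i'+1, ℓ'+1) + (ℓ'+1) * u (i'+1, ℓ'+2)
        = ℓ' * v (i'+1, ℓ'+1) + (ℓ'+1) * v (i'+1, ℓ'+2)
          + ∑ j ∈ Finset.Icc (ℓ'+3) (m (i'+1)), (j - 1) * v (i'+1, j)
          + ∑ r ∈ Finset.Icc (i'+1+1) k,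
              ∑ j ∈ Finset.Icc 1 (m r), (j - 1) * v (r, j) := by linarith [e2]
    refine final_contra ℓ' (u (i'+1, ℓ'+1)) (u (i'+1, ℓ'+2)) (v (i'+1, ℓ'+1))
      (v (i'+1, ℓ'+2)) (∑ j ∈ Finset.Icc (ℓ'+3) (m (i'+1)), v (i'+1, j))
      (∑ j ∈ Finset.Icc (ℓ'+3) (m (i'+1)), (j - 1) * v (i'+1, j))
      (∑ r ∈ Finset.Icc (i'+1+1) k, ∑ j ∈ Finset.Icc 1 (m r), (j - 1) * v (r, j))
      eq1 eq2 h3 ?_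
    rcases hbl with hb | hb
    · -- b = ℓ'+1
      exact Or.inl (by rw [hb] at hab; exact hab)
    · -- b = ℓ'+2
      refine Or.inr ⟨hmin (i'+1, ℓ'+1) (Or.inr ⟨rfl, by omega⟩), ?_⟩
      rw [hb] at hab; exact hab
  · -- Case 3 : i < a, b = 1
    subst hbone
    obtain ⟨a', rfl⟩ : ∃ t, a = t + 1 := ⟨a - 1, by omega⟩
    have e2 := hA2
    rw [sum_Icc_split1 (fun r => ∑ j ∈ Finset.Icc 1 (m r), (j - 1) * u (r, j))
          (show a' ≤ k by omega),
        sum_Icc_split1 (fun r => ∑ j ∈ Finset.Icc 1 (m r), (j - 1) * v (r, j))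
          (show a' ≤ k by omega)] at e2
    have eqlow : ∀ r ∈ Finset.Icc 1 a',
        (∑ j ∈ Finset.Icc 1 (m r), (j - 1) * u (r, j))
          = ∑ j ∈ Finset.Icc 1 (m r), (j - 1) * v (r, j) := by
      intro r hr
      simp only [Finset.mem_Icc] at hr
      refine Finset.sum_congr rfl fun j hj => ?_
      rw [hmin (r, j) (Or.inl (by omega))]
    have eqhigh : ∑ r ∈ Finset.Icc (a'+1) k,
        ∑ j ∈ Finset.Icc 1 (m r), (j - 1) * u (r, j) = 0 := by
      refine Finset.sum_eq_zero fun r hr => Finset.sum_eq_zero fun j hj => ?_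
      simp only [Finset.mem_Icc] at hr hj
      by_cases h : u (r, j) = 0
      · rw [h, mul_zero]
      · rcases hsupp r j h with h1 | h2 | h3
        · omega
        · omega
        · rw [h3.2]; simp
    rw [Finset.sum_congr rfl eqlow, eqhigh] at e2
    have tv : ∑ r ∈ Finset.Icc (a'+1) k,
        ∑ j ∈ Finset.Icc 1 (m r), (j - 1) * v (r, j) = 0 := by omega
    rw [Finset.sum_eq_zero_iff] at tv
    have tva := tv (a' + 1) (Finset.mem_Icc.mpr ⟨le_refl _, hak⟩)
    rw [Finset.sum_eq_zero_iff] at tva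
    -- now v (a'+1, j) = 0 for j ≥ 2
    have vz : ∀ j ∈ Finset.Icc 1 (m (a'+1)), j ≠ 1 → v (a'+1, j) = 0 := by
      intro j hj hj1
      have := tva j hj
      simp only [Finset.mem_Icc] at hj
      rcases Nat.mul_eq_zero.mp this with h | h
      · omega
      · exact h
    have hmem : 1 ∈ Finset.Icc 1 (m (a'+1)) := Finset.mem_Icc.mpr ⟨le_refl _, hm _ ha1 hak⟩
    have e1 := hA1 (a'+1) ha1 hak
    rw [← Finset.sum_erase_add _ (fun j => u (a'+1, j)) hmem,
        ← Finset.sum_erase_add _ (fun j => v (a'+1, j)) hmem] at e1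
    have uz : ∑ j ∈ (Finset.Icc 1 (m (a'+1))).erase 1, u (a'+1, j) = 0 := by
      refine Finset.sum_eq_zero fun j hj => ?_
      simp only [Finset.mem_erase, Finset.mem_Icc] at hj
      by_contra h
      rcases hsupp (a'+1) j h with h1 | h2 | h3 <;> omega
    have vz' : ∑ j ∈ (Finset.Icc 1 (m (a'+1))).erase 1, v (a'+1, j) = 0 := by
      refine Finset.sum_eq_zero fun j hj => ?_
      simp only [Finset.mem_erase] at hj
      exact vz j hj.2 hj.1
    rw [uz, vz'] at e1
    omega
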